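/- Let h > 0 and θ ∈ (−π, π) with θ ≠ 0, and define the real number ω(θ) := [((h²/4) + 1) + ((h²/4) − 1) cos θ] / (h sin θ). Then (h²/4)·(e^{iθ} + 1)/(e^{iθ} − 1) − (e^{iθ} − 1)/(e^{iθ} + 1) = −i h ω(θ); in particular, the left-hand side is purely imaginary, and consequently for any c ∈ ℂ the function û(t) = c·e^{−i ω(θ) t} satisfies h û'(t) = [(h²/4)(e^{iθ} + 1)/(e^{iθ} − 1) − (e^{iθ} − 1)/(e^{iθ} + 1)]·û(t) with |û(t)| = |c| constant in t. -/

import Mathlib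

open Complex

noncomputable section

/-- Dispersion relation for the linearization of the semi-discrete massive Thirring model
at the zero background. -/
theorem mtm_zero_background_dispersion
    (h : ℝ) (hh : 0 < h) (θ : ℝ) (hθ : θ ∈ Set.Ioo (-Real.pi) Real.pi) (hθ0 : θ ≠ 0)
    (ω : ℝ)
    (hω : ω = ((h ^ 2 / 4 + 1) + (h ^ 2 / 4 - 1) * Real.cos θ) / (h * Real.sin θ)) :
    (h ^ 2 / 4) * (Complex.exp (Complex.I * θ) + 1) / (Complex.exp (Complex.I * θ) - 1)
        - (Complex.exp (Complex.I * θ) - 1) / (Complex.exp (Complex.I * θ) + 1)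
      = -Complex.I * h * ω ∧
    (∀ c : ℂ, ∀ t : ℝ,
      h * deriv (fun s : ℝ => c * Complex.exp (-Complex.I * ω * s)) t
        = ((h ^ 2 / 4) * (Complex.exp (Complex.I * θ) + 1) / (Complex.exp (Complex.I * θ) - 1)
            - (Complex.exp (Complex.I * θ) - 1) / (Complex.exp (Complex.I * θ) + 1))
          * (c * Complex.exp (-Complex.I * ω * t))) ∧
    (∀ c : ℂ, ∀ t : ℝ,
      ‖c * Complex.exp (-Complex.I * ω * t)‖ = ‖c‖) := by
  have hs : Real.sin θ ≠ 0 := by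
    intro H
    exact hθ0 ((Real.sin_eq_zero_iff_of_lt_of_lt hθ.1 hθ.2).mp H)
  have he : Complex.exp (Complex.I * θ) = Complex.cos θ + Complex.sin θ * Complex.I := by
    rw [mul_comm, Complex.exp_mul_I]
  have h1 : Complex.exp (Complex.I * θ) - 1 ≠ 0 := by
    intro H
    apply hs
    have := congrArg Complex.im H
    simpa [he, ← Complex.ofReal_sin, ← Complex.ofReal_cos] using this
  have h2 : Complex.exp (Complex.I * θ) + 1 ≠ 0 := by
    intro H
    apply hs
    have := congrArg Complex.im H
    simpa [he, ← Complex.ofReal_sin, ← Complex.ofReal_cos] using this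
  have hsC : Complex.sin θ ≠ 0 := by
    rw [← Complex.ofReal_sin]
    exact_mod_cast hs
  have hhC : (h : ℂ) ≠ 0 := by exact_mod_cast hh.ne'
  have hω' : (ω : ℂ) = (((h:ℂ) ^ 2 / 4 + 1) + ((h:ℂ) ^ 2 / 4 - 1) * Complex.cos θ)
      / ((h:ℂ) * Complex.sin θ) := by
    rw [hω]; push_cast; ring
  have key : (h ^ 2 / 4 : ℂ) * (Complex.exp (Complex.I * θ) + 1) / (Complex.exp (Complex.I * θ) - 1)
        - (Complex.exp (Complex.I * θ) - 1) / (Complex.exp (Complex.I * θ) + 1)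
      = -Complex.I * h * ω := by
    rw [div_sub_div _ _ h1 h2, div_eq_iff (mul_ne_zero h1 h2), hω', he]
    field_simp
    linear_combination (Complex.sin θ^3 * ((h:ℂ)^2 - 4) + 2 * Complex.sin θ * (Complex.cos θ + Complex.sin θ * Complex.I) * ((h:ℂ)^2 + 4 + Complex.cos θ * ((h:ℂ)^2 - 4)) - Complex.I * Complex.sin θ^2 * ((h:ℂ)^2 + 4 + Complex.cos θ * ((h:ℂ)^2 - 4))) * Complex.I_sq
      + (-Complex.sin θ * ((h:ℂ)^2 - 4) + Complex.I * ((h:ℂ)^2 + 4 + Complex.cos θ * ((h:ℂ)^2 - 4))) * Complex.sin_sq_add_cos_sq (θ:ℂ)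
  have hderiv : ∀ c : ℂ, ∀ t : ℝ,
      deriv (fun s : ℝ => c * Complex.exp (-Complex.I * ω * s)) t
        = -Complex.I * ω * (c * Complex.exp (-Complex.I * ω * t)) := by
    intro c t
    have hg : HasDerivAt (fun z : ℂ => Complex.exp (-Complex.I * ω * z))
        (-Complex.I * ω * Complex.exp (-Complex.I * ω * t)) (t : ℂ) := by
      simpa [mul_comm] using ((hasDerivAt_id (t:ℂ)).const_mul (-Complex.I * ω)).cexp
    have hd : HasDerivAt (fun s : ℝ => c * Complex.exp (-Complex.I * ω * s))
        (c * (-Complex.I * ω * Complex.exp (-Complex.I * ω * t))) t :=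
      (hg.comp_ofReal).const_mul c
    rw [hd.deriv]; ring
  refine ⟨key, ?_, ?_⟩
  · intro c t
    rw [hderiv c t, key]
    ring
  · intro c t
    simp [map_mul, Complex.norm_exp]
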